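/- For every natural number n and every ordinal γ: γ is of the form α + ω^(n+1) for some ordinal α if and only if γ is a limit point of A_n but not a limit point of the class of limit points of A_n, where A_n is the class of ordinals of the form α + ω^n. -/

import Mathlib

open Ordinal

/-- An ordinal `γ` is a limit point of a set `S` of ordinals if `γ ≠ 0` and
`sup {δ ∈ S | δ < γ} = γ`. -/
def IsLimitPointOf (S : Set Ordinal) (γ : Ordinal) : Prop :=
  γ ≠ 0 ∧ sSup {δ | δ ∈ S ∧ δ < γ} = γ

/-- The set `A_n` of ordinals of the form `α + ω^n`. -/
def Aset (n : ℕ) : Set Ordinal := {γ | ∃ α : Ordinal, γ = α + omega0 ^ (n : Ordinal)}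

/-- Master characterization of limit points. -/
lemma isLimitPointOf_iff {S : Set Ordinal} {γ : Ordinal} :
    IsLimitPointOf S γ ↔ γ ≠ 0 ∧ ∀ β < γ, ∃ δ, δ ∈ S ∧ δ < γ ∧ β < δ := by
  constructor
  · rintro ⟨h0, hsup⟩
    refine ⟨h0, fun β hβ => ?_⟩
    have hne : {δ | δ ∈ S ∧ δ < γ}.Nonempty := by
      by_contra h
      rw [Set.not_nonempty_iff_eq_empty] at h
      rw [h, csSup_empty] at hsup
      exact h0 hsup.symm
    obtain ⟨δ, hδ, hβδ⟩ := exists_lt_of_lt_csSup hne (hsup.symm ▸ hβ)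
    exact ⟨δ, hδ.1, hδ.2, hβδ⟩
  · rintro ⟨h0, h⟩
    refine ⟨h0, ?_⟩
    have hne : {δ | δ ∈ S ∧ δ < γ}.Nonempty := by
      obtain ⟨δ, hδS, hδγ, -⟩ := h 0 (pos_iff_ne_zero.2 h0)
      exact ⟨δ, hδS, hδγ⟩
    refine IsLUB.csSup_eq ⟨fun δ hδ => hδ.2.le, fun c hc => ?_⟩ hne
    by_contra hlt
    push_neg at hlt
    obtain ⟨δ, hδS, hδγ, hcδ⟩ := h c hlt
    exact absurd (hc ⟨hδS, hδγ⟩) (not_le.2 hcδ)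

/-- Limit points of the set of successor multiples of `u` are exactly the
`u * l` with `l` a limit ordinal. -/
lemma limitPoint_succ_mul {u : Ordinal} (hu : 0 < u) (γ : Ordinal) :
    IsLimitPointOf {δ | ∃ a : Ordinal, δ = u * (a + 1)} γ ↔
      ∃ l : Ordinal, Order.IsSuccLimit l ∧ γ = u * l := by
  rw [isLimitPointOf_iff]
  constructor
  · rintro ⟨h0, h⟩
    -- first: u ∣ γ
    have hdvd : u ∣ γ := by
      by_contra hnd
      have hr : γ % u ≠ 0 := fun h => hnd (Ordinal.dvd_of_mod_eq_zero h)
      have hc : u * (γ / u) < γ := by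
        conv_rhs => rw [← Ordinal.div_add_mod γ u]
        simpa using (pos_iff_ne_zero.2 hr)
      obtain ⟨δ, ⟨a, rfl⟩, hδγ, hcδ⟩ := h _ hc
      have h1 : u * (a + 1) < u * (γ / u + 1) := by
        calc u * (a + 1) < γ := hδγ
        _ < u * (γ / u) + u := by
            conv_lhs => rw [← Ordinal.div_add_mod γ u]
            exact (add_lt_add_iff_left _).2 (Ordinal.mod_lt γ hu.ne')
        _ = u * (γ / u + 1) := by rw [mul_add, mul_one]
      have h2 : a + 1 ≤ γ / u := by
        have h3 := (mul_lt_mul_iff_right₀ hu).1 h1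
        rwa [show γ / u + 1 = Order.succ (γ / u) from add_one_eq_succ _,
          Order.lt_succ_iff] at h3
      have : u * (a + 1) ≤ u * (γ / u) := (mul_le_mul_iff_right₀ hu).2 h2
      exact absurd (lt_of_lt_of_le hcδ this) (lt_irrefl _)
    obtain ⟨q, rfl⟩ := hdvd
    have hq0 : q ≠ 0 := by rintro rfl; simp at h0
    refine ⟨q, ?_, rfl⟩
    rcases Ordinal.zero_or_succ_or_isSuccLimit q with rfl | ⟨p, rfl⟩ | hq
    · exact absurd rfl hq0
    · exfalso
      have hc : u * p < u * Order.succ p := (mul_lt_mul_iff_right₀ hu).2 (Order.lt_succ p)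
      obtain ⟨δ, ⟨a, rfl⟩, hδγ, hcδ⟩ := h _ hc
      have ha1 : a + 1 ≤ p := by
        have h3 : a + 1 < Order.succ p := (mul_lt_mul_iff_right₀ hu).1 hδγ
        rwa [Order.lt_succ_iff] at h3
      have : u * (a + 1) ≤ u * p := (mul_le_mul_iff_right₀ hu).2 ha1
      exact absurd (lt_of_lt_of_le hcδ this) (lt_irrefl _)
    · exact hq
  · rintro ⟨l, hl, rfl⟩
    refine ⟨(mul_pos hu hl.pos).ne', fun β hβ => ?_⟩
    obtain ⟨a, ha, hβa⟩ := (lt_mul_iff_of_isSuccLimit hl).1 hβ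
    have ha1 : a + 1 < l := by rw [add_one_eq_succ]; exact hl.succ_lt ha
    refine ⟨u * (a + 1), ⟨a, rfl⟩, (mul_lt_mul_iff_right₀ hu).2 ha1, ?_⟩
    exact lt_of_lt_of_le hβa ((mul_le_mul_iff_right₀ hu).2 le_self_add)

/-- Every `α + u` with `u` an `ω`-power (given through the absorption property)
is a successor multiple of `u`. -/
lemma add_eq_succ_mul {u : Ordinal} (hu : u ≠ 0) (habs : ∀ r < u, r + u = u) (α : Ordinal) :
    ∃ a : Ordinal, α + u = u * (a + 1) := by
  refine ⟨α / u, ?_⟩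
  conv_lhs => rw [← Ordinal.div_add_mod α u]
  rw [add_assoc, habs _ (Ordinal.mod_lt α hu), mul_add, mul_one]

lemma Aset_eq (n : ℕ) :
    Aset n = {δ | ∃ a : Ordinal, δ = omega0 ^ (n : Ordinal) * (a + 1)} := by
  ext γ
  constructor
  · rintro ⟨α, rfl⟩
    obtain ⟨a, ha⟩ := add_eq_succ_mul (opow_pos _ omega0_pos).ne' (fun r hr => add_omega0_opow hr) α
    exact ⟨a, ha⟩
  · rintro ⟨a, rfl⟩
    exact ⟨omega0 ^ (n : Ordinal) * a, by rw [mul_add, mul_one]⟩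

theorem form_iff_limitPoint (n : ℕ) (γ : Ordinal) :
    (∃ α : Ordinal, γ = α + omega0 ^ ((n : Ordinal) + 1)) ↔
      (IsLimitPointOf (Aset n) γ ∧
        ¬ IsLimitPointOf {δ | IsLimitPointOf (Aset n) δ} γ) := by
  set u : Ordinal := omega0 ^ (n : Ordinal) with hudef
  set b : Ordinal := omega0 ^ ((n : Ordinal) + 1) with hbdef
  have hu : 0 < u := opow_pos _ omega0_pos
  have hb : 0 < b := opow_pos _ omega0_pos
  have hbu : b = u * omega0 := by rw [hbdef, hudef, add_one_eq_succ, opow_succ]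
  have hLP1 : ∀ δ, IsLimitPointOf (Aset n) δ ↔ ∃ l : Ordinal, Order.IsSuccLimit l ∧ δ = u * l := by
    intro δ; rw [Aset_eq n]; exact limitPoint_succ_mul hu δ
  -- level-1 limit points as nonzero multiples of b
  have hS2 : ∀ δ, IsLimitPointOf (Aset n) δ ↔ ∃ q : Ordinal, q ≠ 0 ∧ δ = b * q := by
    intro δ
    rw [hLP1]
    constructor
    · rintro ⟨l, hl, rfl⟩
      obtain ⟨-, q, rfl⟩ := isSuccLimit_iff_omega0_dvd.1 hl
      have hq : q ≠ 0 := by rintro rfl; rw [mul_zero] at hl; exact hl.pos.false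
      exact ⟨q, hq, by rw [hbu, mul_assoc]⟩
    · rintro ⟨q, hq, rfl⟩
      refine ⟨omega0 * q, isSuccLimit_mul_left isSuccLimit_omega0 (pos_iff_ne_zero.2 hq), ?_⟩
      rw [hbu, mul_assoc]
  -- limit points of nonzero multiples of b = limit points of succ multiples of b
  have hcongr : IsLimitPointOf {δ | IsLimitPointOf (Aset n) δ} γ ↔
      IsLimitPointOf {δ | ∃ a : Ordinal, δ = b * (a + 1)} γ := by
    rw [isLimitPointOf_iff, isLimitPointOf_iff]
    constructor
    · rintro ⟨h0, h⟩
      refine ⟨h0, fun β hβ => ?_⟩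
      obtain ⟨δ, hδS, hδγ, hβδ⟩ := h β hβ
      obtain ⟨q, hq, rfl⟩ := (hS2 δ).1 hδS
      rcases Ordinal.zero_or_succ_or_isSuccLimit q with rfl | ⟨p, rfl⟩ | hql
      · exact absurd rfl hq
      · exact ⟨b * Order.succ p, ⟨p, by rw [add_one_eq_succ]⟩, hδγ, hβδ⟩
      · obtain ⟨a, ha, hβa⟩ := (lt_mul_iff_of_isSuccLimit hql).1 hβδ
        have ha1 : a + 1 < q := by rw [add_one_eq_succ]; exact hql.succ_lt ha
        refine ⟨b * (a + 1), ⟨a, rfl⟩, lt_trans ((mul_lt_mul_iff_right₀ hb).2 ha1) hδγ, ?_⟩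
        exact lt_of_lt_of_le hβa ((mul_le_mul_iff_right₀ hb).2 le_self_add)
    · rintro ⟨h0, h⟩
      refine ⟨h0, fun β hβ => ?_⟩
      obtain ⟨δ, ⟨a, rfl⟩, hδγ, hβδ⟩ := h β hβ
      refine ⟨b * (a + 1), (hS2 _).2 ⟨a + 1, ?_, rfl⟩, hδγ, hβδ⟩
      exact (lt_of_lt_of_le zero_lt_one (le_add_self)).ne'
  rw [hcongr, limitPoint_succ_mul hb γ]
  constructor
  · rintro ⟨α, rfl⟩
    obtain ⟨a, ha⟩ := add_eq_succ_mul (opow_pos _ omega0_pos).ne' (fun r hr => add_omega0_opow hr) α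
    rw [ha]
    constructor
    · refine (hLP1 _).2 ⟨omega0 * (a + 1),
        isSuccLimit_mul_left isSuccLimit_omega0 (lt_of_lt_of_le zero_lt_one (le_add_self)),
        ?_⟩
      rw [show omega0 ^ ((n : Ordinal) + 1) = b from hbdef.symm, hbu, mul_assoc]
    · rintro ⟨l, hl, heq⟩
      have hal : a + 1 = l := by
        by_contra hne
        rcases lt_or_gt_of_ne hne with hlt | hlt
        · exact absurd heq (ne_of_lt ((mul_lt_mul_iff_right₀ hb).2 hlt))
        · exact absurd heq (ne_of_gt ((mul_lt_mul_iff_right₀ hb).2 hlt))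
      rw [← hal, add_one_eq_succ] at hl
      exact (hl.succ_lt (Order.lt_succ a)).false
  · rintro ⟨h1, h2⟩
    obtain ⟨l, hl, rfl⟩ := (hLP1 γ).1 h1
    obtain ⟨-, q, rfl⟩ := isSuccLimit_iff_omega0_dvd.1 hl
    have hq : q ≠ 0 := by rintro rfl; rw [mul_zero] at hl; exact hl.pos.false
    rcases Ordinal.zero_or_succ_or_isSuccLimit q with rfl | ⟨p, rfl⟩ | hql
    · exact absurd rfl hq
    · exact ⟨b * p, by rw [hbu, mul_succ, mul_add, mul_assoc]⟩
    · exact absurd ⟨q, hql, by rw [hbu, mul_assoc]⟩ h2
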